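/- In Q_n, for i ∉ A, the generator z_{A,i} equals r(A∪{i}) - r(A), and also equals ∑_{D : i∈D⊆A∪{i}} u(D), where u(B) := ∑_{D⊆B} (-1)^{|B|-|D|} r(D). -/

import Mathlib

namespace QnPaper

/-- The defining relations of the quadratic algebra `Q_n`:
for `A ⊆ {1,…,n}` and distinct `i, j ∉ A`,
`z_{A∪{i},j} + z_{A,i} = z_{A∪{j},i} + z_{A,j}` and
`z_{A∪{i},j} * z_{A,i} = z_{A∪{j},i} * z_{A,j}`. -/
inductive QRel (k : Type) [Field k] (n : ℕ) :
    FreeAlgebra k (Finset (Fin n) × Fin n) → FreeAlgebra k (Finset (Fin n) × Fin n) → Prop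
  | add_rel (A : Finset (Fin n)) (i j : Fin n) (hi : i ∉ A) (hj : j ∉ A) (hij : i ≠ j) :
      QRel k n (FreeAlgebra.ι k (insert i A, j) + FreeAlgebra.ι k (A, i))
        (FreeAlgebra.ι k (insert j A, i) + FreeAlgebra.ι k (A, j))
  | mul_rel (A : Finset (Fin n)) (i j : Fin n) (hi : i ∉ A) (hj : j ∉ A) (hij : i ≠ j) :
      QRel k n (FreeAlgebra.ι k (insert i A, j) * FreeAlgebra.ι k (A, i))
        (FreeAlgebra.ι k (insert j A, i) * FreeAlgebra.ι k (A, j))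

/-- The quadratic algebra `Q_n`. -/
abbrev Q (k : Type) [Field k] (n : ℕ) := RingQuot (QRel k n)

/-- The generator `z_{A,i}` of `Q_n` (only meaningful when `i ∉ A`). -/
def z (k : Type) [Field k] (n : ℕ) (A : Finset (Fin n)) (i : Fin n) : Q k n :=
  RingQuot.mkAlgHom k (QRel k n) (FreeAlgebra.ι k (A, i))

/-- `rAux s [i₁,…,i_r] = z_{s,i₁} + z_{s∪{i₁},i₂} + ⋯`. -/
def rAux (k : Type) [Field k] (n : ℕ) (s : Finset (Fin n)) : List (Fin n) → Q k n
  | [] => 0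
  | a :: l => z k n s a + rAux k n (insert a s) l

/-- `r(A) = z_{A,∅}`, computed using the increasing ordering of `A`. -/
def rFin (k : Type) [Field k] (n : ℕ) (A : Finset (Fin n)) : Q k n :=
  rAux k n ∅ (A.sort (· ≤ ·))

/-- `u(B) = z_{∅,B} = ∑_{D ⊆ B} (-1)^{|B|-|D|} r(D)`. -/
def uFin (k : Type) [Field k] (n : ℕ) (B : Finset (Fin n)) : Q k n :=
  ∑ D ∈ B.powerset, (-1 : Q k n) ^ (B.card - D.card) * rFin k n D

variable {k : Type} [Field k] {n : ℕ}

lemma z_swap (s : Finset (Fin n)) (i j : Fin n) (hi : i ∉ s) (hj : j ∉ s) (hij : i ≠ j) :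
    z k n s i + z k n (insert i s) j = z k n s j + z k n (insert j s) i := by
  have h := RingQuot.mkAlgHom_rel k (QRel.add_rel (k := k) (n := n) s i j hi hj hij)
  simp only [map_add] at h
  unfold z
  rw [add_comm (RingQuot.mkAlgHom k (QRel k n) (FreeAlgebra.ι k (s, i))),
    add_comm (RingQuot.mkAlgHom k (QRel k n) (FreeAlgebra.ι k (s, j)))]
  exact h

lemma rAux_perm {l₁ l₂ : List (Fin n)} (h : l₁.Perm l₂) :
    ∀ s : Finset (Fin n), l₁.Nodup → (∀ a ∈ l₁, a ∉ s) →
      rAux k n s l₁ = rAux k n s l₂ := by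
  induction h with
  | nil => intro _ _ _; rfl
  | cons a h ih =>
      intro s hnd hmem
      simp only [rAux]
      rw [ih (insert a s) (List.nodup_cons.1 hnd).2]
      intro b hb
      simp only [Finset.mem_insert, not_or]
      exact ⟨fun hba => (List.nodup_cons.1 hnd).1 (hba ▸ hb),
        hmem b (List.mem_cons_of_mem _ hb)⟩
  | swap a b l =>
      intro s hnd hmem
      simp only [rAux]
      have hab : b ≠ a := by
        intro hba; exact (List.nodup_cons.1 hnd).1 (hba ▸ List.mem_cons_self)
      have hbs : b ∉ s := hmem b (by simp)
      have has : a ∉ s := hmem a (by simp)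
      rw [Finset.insert_comm, ← add_assoc, ← add_assoc, z_swap s b a hbs has hab]
  | trans h₁ h₂ ih₁ ih₂ =>
      intro s hnd hmem
      rw [ih₁ s hnd hmem, ih₂ s (hnd.perm h₁)
        (fun a ha => hmem a (h₁.mem_iff.2 ha))]

lemma rAux_append_singleton (i : Fin n) :
    ∀ (l : List (Fin n)) (s : Finset (Fin n)),
      rAux k n s (l ++ [i]) = rAux k n s l + z k n (s ∪ l.toFinset) i := by
  intro l
  induction l with
  | nil => intro s; simp [rAux]
  | cons a t ih =>
      intro s
      rw [List.cons_append]
      show z k n s a + rAux k n (insert a s) (t ++ [i]) = _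
      rw [ih, List.toFinset_cons, Finset.union_insert, ← Finset.insert_union]
      show _ = z k n s a + rAux k n (insert a s) t + z k n (insert a s ∪ t.toFinset) i
      rw [add_assoc]

lemma rFin_insert (A : Finset (Fin n)) (i : Fin n) (hi : i ∉ A) :
    rFin k n (insert i A) = rFin k n A + z k n A i := by
  have hnd : (A.sort (· ≤ ·) ++ [i]).Nodup := by
    rw [List.nodup_append]
    refine ⟨A.sort_nodup _, List.nodup_singleton i, ?_⟩
    intro a ha b hb hab
    simp only [List.mem_singleton] at hb
    subst hb
    exact hi (by rw [← hab]; exact (Finset.mem_sort _).1 ha)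
  have hperm : (A.sort (· ≤ ·) ++ [i]).Perm ((insert i A).sort (· ≤ ·)) := by
    rw [List.perm_ext_iff_of_nodup hnd ((insert i A).sort_nodup _)]
    intro a
    simp [Finset.mem_sort, or_comm]
  have h := rAux_perm (k := k) hperm ∅ hnd (by simp)
  rw [rFin, ← h, rAux_append_singleton, Finset.sort_toFinset, Finset.empty_union]
  rfl

lemma sum_uFin (C : Finset (Fin n)) :
    ∑ B ∈ C.powerset, uFin k n B = rFin k n C := by
  classical
  simp only [uFin]
  rw [Finset.sum_comm' (s' := fun D => C.powerset.filter (fun B => D ⊆ B))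
    (t' := C.powerset)
    (by
      intro B D
      simp only [Finset.mem_powerset, Finset.mem_filter]
      constructor
      · rintro ⟨h1, h2⟩; exact ⟨⟨h1, h2⟩, h2.trans h1⟩
      · rintro ⟨⟨h1, h2⟩, _⟩; exact ⟨h1, h2⟩)]
  have inner : ∀ D ∈ C.powerset,
      ∑ B ∈ C.powerset.filter (fun B => D ⊆ B),
        (-1 : Q k n) ^ (B.card - D.card) * rFin k n D
        = if D = C then rFin k n D else 0 := by
    intro D hD
    rw [Finset.mem_powerset] at hD
    rw [← Finset.sum_mul]
    have key : ∑ B ∈ C.powerset.filter (fun B => D ⊆ B),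
        (-1 : Q k n) ^ (B.card - D.card) = if D = C then 1 else 0 := by
      rw [Finset.sum_bij' (t := (C \ D).powerset)
        (g := fun E => (-1 : Q k n) ^ E.card)
        (i := fun B _ => B \ D) (j := fun E _ => D ∪ E)
        (hi := by
          intro B hB
          simp only [Finset.mem_filter, Finset.mem_powerset] at hB
          exact Finset.mem_powerset.2 (Finset.sdiff_subset_sdiff hB.1 le_rfl))
        (hj := by
          intro E hE
          simp only [Finset.mem_powerset] at hE
          simp only [Finset.mem_filter, Finset.mem_powerset]
          exact ⟨Finset.union_subset hD (hE.trans Finset.sdiff_subset),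
            Finset.subset_union_left⟩)
        (left_neg := by
          intro B hB
          simp only [Finset.mem_filter, Finset.mem_powerset] at hB
          exact Finset.union_sdiff_of_subset hB.2)
        (right_neg := by
          intro E hE
          simp only [Finset.mem_powerset] at hE
          exact Finset.union_sdiff_cancel_left
            (Finset.disjoint_of_subset_right hE Finset.disjoint_sdiff))
        (h := by
          intro B hB
          simp only [Finset.mem_filter, Finset.mem_powerset] at hB
          congr 1
          rw [Finset.card_sdiff_of_subset hB.2])]
      have h1 : (∑ E ∈ (C \ D).powerset, ((-1 : ℤ)) ^ E.card) =
          if C \ D = ∅ then 1 else 0 := Finset.sum_powerset_neg_one_pow_card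
      have h2 : (((∑ E ∈ (C \ D).powerset, ((-1 : ℤ)) ^ E.card) : ℤ) : Q k n) =
          ∑ E ∈ (C \ D).powerset, (-1 : Q k n) ^ E.card := by push_cast; rfl
      rw [← h2, h1]
      split_ifs with h3 h4 h4
      · exact Int.cast_one
      · exact absurd (le_antisymm hD (Finset.sdiff_eq_empty_iff_subset.1 h3)) h4
      · subst h4; simp at h3
      · exact Int.cast_zero
    rw [key]
    split_ifs with h
    · rw [one_mul]
    · rw [zero_mul]
  rw [Finset.sum_congr rfl inner, Finset.sum_ite_eq' C.powerset C (fun D => rFin k n D),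
    if_pos (Finset.mem_powerset_self C)]

/-- For `i ∉ A`, `z_{A,i} = r(A∪{i}) - r(A) = ∑_{i ∈ D ⊆ A∪{i}} u(D)`. -/
theorem stmt7 (k : Type) [Field k] (n : ℕ) (A : Finset (Fin n)) (i : Fin n)
    (hi : i ∉ A) :
    z k n A i = rFin k n (insert i A) - rFin k n A ∧
    z k n A i = ∑ D ∈ (insert i A).powerset.filter (fun D => i ∈ D), uFin k n D := by
  classical
  have h1 : z k n A i = rFin k n (insert i A) - rFin k n A := by
    rw [rFin_insert A i hi]
    exact (add_sub_cancel_left _ _).symm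
  refine ⟨h1, ?_⟩
  have hsplit := Finset.sum_filter_add_sum_filter_not (insert i A).powerset
    (fun D => i ∈ D) (fun D => uFin k n D)
  have hnotmem : (insert i A).powerset.filter (fun D => i ∉ D) = A.powerset := by
    ext D
    simp only [Finset.mem_filter, Finset.mem_powerset]
    constructor
    · rintro ⟨h1, h2⟩
      intro a ha
      rcases Finset.mem_insert.1 (h1 ha) with h | h
      · exact absurd (h ▸ ha) h2
      · exact h
    · intro h
      exact ⟨h.trans (Finset.subset_insert _ _), fun hiD => hi (h hiD)⟩
  rw [hnotmem] at hsplit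
  have hall := sum_uFin (k := k) (insert i A)
  have hA := sum_uFin (k := k) A
  rw [h1, ← hall, ← hA, ← hsplit, add_sub_cancel_right]

end QnPaper
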